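/- Let d ∈ ℕ and let c_n = (2n+1)!!/(2n)!! = (2n+1)!/(4ⁿ·(n!)²). Then for every real x with |x| < 1, |(1 − x)^{−3/2} − Σ_{n=0}^{d} c_n xⁿ| ≤ c_{d+1} · |x|^{d+1} / (1 − |x|)^{d + 5/2}. -/

import Mathlib

open Set

noncomputable def Kc (n : ℕ) : ℝ := (Nat.factorial (2*n+1) : ℝ) / (4^n * Nat.factorial n)

lemma Kc_pos (n : ℕ) : 0 < Kc n := by
  unfold Kc
  positivity

lemma Kc_succ (n : ℕ) : Kc (n+1) = Kc n * (3/2 + n) := by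
  unfold Kc
  have h1 : 2*(n+1)+1 = (2*n+1) + 1 + 1 := by ring
  rw [h1, Nat.factorial_succ, Nat.factorial_succ (2*n+1), Nat.factorial_succ n]
  push_cast
  have h4 : (4:ℝ)^(n+1) = 4 * 4^n := by ring
  rw [h4]
  have hf : (Nat.factorial n : ℝ) ≠ 0 := Nat.cast_ne_zero.mpr n.factorial_ne_zero
  have h4n : (4:ℝ)^n ≠ 0 := by positivity
  field_simp
  ring

lemma hda (e c p : ℝ) (x : ℝ) (hx : (0:ℝ) < 1 - e*x) :
    HasDerivAt (fun y => c * (1 - e*y) ^ p) (c * (p * (1 - e*x) ^ (p-1) * (-e))) x := by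
  have h1 : HasDerivAt (fun y : ℝ => 1 - e*y) (-e) x := by
    simpa using ((hasDerivAt_id x).const_mul e).const_sub 1
  have h2 : HasDerivAt (fun u : ℝ => u ^ p) (p * (1-e*x)^(p-1)) (1-e*x) :=
    Real.hasDerivAt_rpow_const (Or.inl hx.ne')
  simpa [mul_assoc] using ((h2.comp x h1)).const_mul c

lemma iterWithin (e b : ℝ) (hb : 0 < b) (h : ∀ y ∈ Icc (0:ℝ) b, e*y < 1) (n : ℕ) :
    ∀ y ∈ Icc (0:ℝ) b, iteratedDerivWithin n (fun z => (1 - e*z) ^ (-(3/2):ℝ)) (Icc 0 b) y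
      = e^n * Kc n * (1 - e*y) ^ (-(3/2) - n : ℝ) := by
  induction n with
  | zero =>
    intro y hy
    simp [Kc, iteratedDerivWithin_zero]
  | succ n ih =>
    intro y hy
    have hud : UniqueDiffOn ℝ (Icc (0:ℝ) b) := uniqueDiffOn_Icc hb
    rw [iteratedDerivWithin_succ]
    have heq : derivWithin (iteratedDerivWithin n (fun z => (1 - e*z) ^ (-(3/2):ℝ)) (Icc 0 b))
        (Icc 0 b) y
        = derivWithin (fun z => (e^n * Kc n) * (1 - e*z) ^ (-(3/2) - n : ℝ)) (Icc 0 b) y := by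
      apply derivWithin_congr
      · intro z hz; rw [ih z hz]
      · rw [ih y hy]
    rw [heq]
    have hpos : (0:ℝ) < 1 - e*y := by linarith [h y hy]
    rw [((hda e (e^n * Kc n) (-(3/2) - n) y hpos).hasDerivWithinAt).derivWithin (hud y hy)]
    rw [Kc_succ]
    push_cast
    have : (-(3/2) - (n:ℝ)) - 1 = -(3/2) - ((n:ℝ)+1) := by ring
    rw [this]
    ring

lemma cdOn (e b : ℝ) (hb : 0 < b) (h : ∀ y ∈ Icc (0:ℝ) b, e*y < 1) (m : ℕ) :
    ContDiffOn ℝ m (fun z => (1 - e*z) ^ (-(3/2):ℝ)) (Icc 0 b) := by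
  intro y hy
  have hpos : (0:ℝ) < 1 - e*y := by linarith [h y hy]
  exact (((Real.contDiffAt_rpow_const_of_ne (p := -(3/2)) hpos.ne').comp y
    (by fun_prop : ContDiffAt ℝ m (fun z : ℝ => 1 - e*z) y))).contDiffWithinAt

lemma key (d : ℕ) (e b : ℝ) (he : |e| = 1) (hb : 0 < b) (hb1 : b < 1) :
    |(1 - e*b) ^ (-(3/2):ℝ) - ∑ n ∈ Finset.range (d + 1),
        ((Nat.factorial (2 * n + 1) : ℝ) / (4 ^ n * (Nat.factorial n : ℝ) ^ 2)) * (e*b) ^ n|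
      ≤ ((Nat.factorial (2 * (d+1) + 1) : ℝ) / (4 ^ (d+1) * (Nat.factorial (d+1) : ℝ) ^ 2))
          * b ^ (d + 1) / (1 - b) ^ ((d : ℝ) + 5 / 2) := by
  have hy1 : ∀ y ∈ Icc (0:ℝ) b, e*y < 1 := by
    intro y hy
    rcases hy with ⟨hy0, hyb⟩
    calc e*y ≤ |e*y| := le_abs_self _
    _ = |e| * |y| := abs_mul e y
    _ = y := by rw [he, one_mul, abs_of_nonneg hy0]
    _ ≤ b := hyb
    _ < 1 := hb1
  have hud : UniqueDiffOn ℝ (Icc (0:ℝ) b) := uniqueDiffOn_Icc hb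
  set f : ℝ → ℝ := fun z => (1 - e*z) ^ (-(3/2):ℝ) with hf
  have hcd : ContDiffOn ℝ d f (Icc 0 b) := cdOn e b hb hy1 d
  have hdiff : DifferentiableOn ℝ (iteratedDerivWithin d f (Icc 0 b)) (Ioo 0 b) := by
    have hg : DifferentiableOn ℝ
        (fun z => (e^d * Kc d) * (1 - e*z) ^ (-(3/2) - (d:ℝ))) (Ioo 0 b) := by
      intro z hz
      have hzpos : (0:ℝ) < 1 - e*z := by
        have := hy1 z (Ioo_subset_Icc_self hz); linarith
      exact ((hda e (e^d * Kc d) (-(3/2) - (d:ℝ)) z hzpos).differentiableAt).differentiableWithinAt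
    refine hg.congr ?_
    intro z hz
    rw [iterWithin e b hb hy1 d z (Ioo_subset_Icc_self hz)]
  obtain ⟨ξ, hξ, hrem⟩ := taylor_mean_remainder_lagrange (n := d) hb.ne
    (by rwa [uIcc_of_le hb.le]) (by rwa [uIcc_of_le hb.le, uIoo_of_le hb.le])
  rw [uIcc_of_le hb.le] at hrem
  rw [uIoo_of_le hb.le] at hξ
  have htay : taylorWithinEval f d (Icc 0 b) 0 b
      = ∑ n ∈ Finset.range (d + 1),
        ((Nat.factorial (2 * n + 1) : ℝ) / (4 ^ n * (Nat.factorial n : ℝ) ^ 2)) * (e*b) ^ n := by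
    rw [taylor_within_apply]
    apply Finset.sum_congr rfl
    intro k _
    rw [iterWithin e b hb hy1 k 0 (by exact ⟨le_refl 0, hb.le⟩)]
    have hfk : (Nat.factorial k : ℝ) ≠ 0 := Nat.cast_ne_zero.mpr k.factorial_ne_zero
    have h4k : (4:ℝ)^k ≠ 0 := by positivity
    simp only [mul_zero, sub_zero, Real.one_rpow, smul_eq_mul, mul_one, Kc, mul_pow]
    field_simp
  rw [hf] at hrem
  simp only [hf] at htay
  rw [htay] at hrem
  rw [hrem]
  rw [iterWithin e b hb hy1 (d+1) ξ (Ioo_subset_Icc_self hξ)]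
  have hξpos : (0:ℝ) < 1 - e*ξ := by
    have := hy1 ξ (Ioo_subset_Icc_self hξ); linarith
  have h1b : (0:ℝ) < 1 - b := by linarith
  have hle : 1 - b ≤ 1 - e*ξ := by
    have h1 : e*ξ ≤ b := by
      calc e*ξ ≤ |e*ξ| := le_abs_self _
      _ = |e| * |ξ| := abs_mul e ξ
      _ = ξ := by rw [he, one_mul, abs_of_nonneg hξ.1.le]
      _ ≤ b := hξ.2.le
    linarith
  set q' : ℝ := (d:ℝ) + 5/2 with hq'
  have hq : -(3/2) - (((d+1):ℕ):ℝ) = -q' := by push_cast [hq']; ring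
  rw [hq]
  have hfd : (0:ℝ) < ((d+1).factorial : ℝ) := by positivity
  have habs : |(e^(d+1) * Kc (d+1) * (1-e*ξ)^(-q')) * (b-0)^(d+1) / (((d+1).factorial : ℝ))|
      = Kc (d+1) * (1-e*ξ)^(-q') * b^(d+1) / ((d+1).factorial : ℝ) := by
    rw [abs_div, abs_mul, abs_mul, abs_mul, abs_pow, abs_pow, he, one_pow, one_mul, sub_zero,
      abs_of_pos (Kc_pos _), abs_of_pos (Real.rpow_pos_of_pos hξpos _), abs_of_pos hb,
      abs_of_pos hfd]
  have hrp : (1-e*ξ)^(-q') ≤ (1-b)^(-q') := by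
    rw [Real.rpow_neg hξpos.le, Real.rpow_neg h1b.le]
    exact inv_anti₀ (Real.rpow_pos_of_pos h1b _)
      (Real.rpow_le_rpow h1b.le hle (by positivity))
  calc |(e^(d+1) * Kc (d+1) * (1-e*ξ)^(-q')) * (b-0)^(d+1) / (((d+1).factorial : ℝ))|
      = Kc (d+1) * (1-e*ξ)^(-q') * b^(d+1) / ((d+1).factorial : ℝ) := habs
    _ ≤ Kc (d+1) * (1-b)^(-q') * b^(d+1) / ((d+1).factorial : ℝ) := by
        gcongr
        exact (Kc_pos _).le
    _ = ((Nat.factorial (2 * (d+1) + 1) : ℝ) / (4 ^ (d+1) * (Nat.factorial (d+1) : ℝ) ^ 2))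
          * b ^ (d + 1) / (1 - b) ^ q' := by
        rw [Real.rpow_neg h1b.le]
        have h1 : ((1-b) ^ q' : ℝ) ≠ 0 := (Real.rpow_pos_of_pos h1b q').ne'
        have h2 : (Nat.factorial (d+1) : ℝ) ≠ 0 := Nat.cast_ne_zero.mpr (d+1).factorial_ne_zero
        have h3 : (4:ℝ)^(d+1) ≠ 0 := by positivity
        unfold Kc
        field_simp

theorem stmt12 (d : ℕ) (x : ℝ) (hx : |x| < 1) :
    |(1 - x) ^ (-(3 / 2 : ℝ)) -
        ∑ n ∈ Finset.range (d + 1),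
          ((Nat.factorial (2 * n + 1) : ℝ) /
            (4 ^ n * (Nat.factorial n : ℝ) ^ 2)) * x ^ n| ≤
      ((Nat.factorial (2 * (d + 1) + 1) : ℝ) /
          (4 ^ (d + 1) * (Nat.factorial (d + 1) : ℝ) ^ 2)) *
        |x| ^ (d + 1) / (1 - |x|) ^ ((d : ℝ) + 5 / 2) := by
  rcases lt_trichotomy x 0 with hneg | hzero | hpos
  · have := key d (-1) (-x) (by simp) (by linarith) (by rwa [abs_of_neg hneg] at hx)
    simpa [abs_of_neg hneg, neg_mul, neg_neg] using this
  · subst hzero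
    simp only [abs_zero, sub_zero, Real.one_rpow, zero_pow (Nat.succ_ne_zero d), mul_zero,
      zero_div]
    rw [Finset.sum_eq_single_of_mem 0 (by simp)]
    · simp
    · intro n _ hn; simp [zero_pow hn]
  · have := key d 1 x (by simp) hpos (by rwa [abs_of_pos hpos] at hx)
    simpa [abs_of_pos hpos] using this
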